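/- Let ε ∈ [0,1) and M, N > 1. Then there exists a CPTP map F from 2×2 complex matrices to 2×2 complex matrices satisfying F(π_M) = π_N and T(F(|1⟩⟨1|), |1⟩⟨1|) ≤ ε, if and only if M ≥ N(1−ε). -/

import Mathlib

open Matrix ComplexOrder

/-- Trace norm of a complex matrix: the trace of `sqrt(AᴴA)` (sum of singular values). -/
noncomputable def traceNorm {n : Type*} [Fintype n] [DecidableEq n]
    (A : Matrix n n ℂ) : ℝ :=
  ((((Matrix.posSemidef_conjTranspose_mul_self A).1.eigenvectorUnitary : Matrix n n ℂ) *
      Matrix.diagonal ((RCLike.ofReal : ℝ → ℂ) ∘ (Real.sqrt ·) ∘ (Matrix.posSemidef_conjTranspose_mul_self A).1.eigenvalues) *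
      (star (Matrix.posSemidef_conjTranspose_mul_self A).1.eigenvectorUnitary : Matrix n n ℂ)).trace).re

/-- Trace distance `T(X,Y) = ‖X - Y‖₁ / 2`. -/
noncomputable def traceDist {n : Type*} [Fintype n] [DecidableEq n]
    (X Y : Matrix n n ℂ) : ℝ :=
  traceNorm (X - Y) / 2

/-- A density matrix: positive semidefinite with unit trace. -/
def IsDensityMatrix {n : Type*} [Fintype n] (ρ : Matrix n n ℂ) : Prop :=
  ρ.PosSemidef ∧ ρ.trace = 1

/-- The battery Gibbs state `π_M = diag(1 - 1/M, 1/M)`. -/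
noncomputable def piM (M : ℝ) : Matrix (Fin 2) (Fin 2) ℂ :=
  Matrix.diagonal ![((1 - 1/M : ℝ) : ℂ), ((1/M : ℝ) : ℂ)]

/-- The excited battery state `|1⟩⟨1| = diag(0,1)`. -/
def ket1 : Matrix (Fin 2) (Fin 2) ℂ :=
  Matrix.diagonal ![0, 1]

/-- A test (POVM effect): `0 ≤ E ≤ I`. -/
def IsTest {n : Type*} [Fintype n] [DecidableEq n] (E : Matrix n n ℂ) : Prop :=
  E.PosSemidef ∧ (1 - E).PosSemidef

/-- Choi matrix `Σ_{ij} E_{ij} ⊗ F(E_{ij})` of a linear map on matrices. -/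
noncomputable def choiMatrix {n m : Type*} [Fintype n] [DecidableEq n] [Fintype m]
    (F : Matrix n n ℂ →ₗ[ℂ] Matrix m m ℂ) :
    Matrix (n × m) (n × m) ℂ :=
  fun p q => F (Matrix.single p.1 q.1 1) p.2 q.2

/-- Completely positive (positive semidefinite Choi matrix) and trace preserving. -/
def IsCPTP {n m : Type*} [Fintype n] [DecidableEq n] [Fintype m]
    (F : Matrix n n ℂ →ₗ[ℂ] Matrix m m ℂ) : Prop :=
  (choiMatrix F).PosSemidef ∧ ∀ X, (F X).trace = X.trace

/-- `n`-fold Kronecker (tensor) power of a `2 × 2` matrix, indexed by bit strings. -/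
def tensPow (A : Matrix (Fin 2) (Fin 2) ℂ) (n : ℕ) :
    Matrix (Fin n → Fin 2) (Fin n → Fin 2) ℂ :=
  fun x y => ∏ i, A (x i) (y i)

/-- `ε`-ball (in trace distance) of density matrices around a set `𝓟`. -/
noncomputable def metBall {n : Type*} [Fintype n] [DecidableEq n]
    (ε : ℝ) (P : Set (Matrix n n ℂ)) : Set (Matrix n n ℂ) :=
  {ω | IsDensityMatrix ω ∧ ∃ ρ ∈ P, traceDist ω ρ ≤ ε}

/-! ### Auxiliary lemmas -/

lemma F_apply_eq' {n m : Type*} [Fintype n] [DecidableEq n] [Fintype m]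
    (F : Matrix n n ℂ →ₗ[ℂ] Matrix m m ℂ) (X : Matrix n n ℂ) (a b : m) :
    F X a b = ∑ i, ∑ j, X i j * choiMatrix F (i, a) (j, b) := by
  conv_lhs => rw [Matrix.matrix_eq_sum_single X]
  rw [map_sum]
  simp only [Matrix.sum_apply]
  refine Finset.sum_congr rfl fun i _ => ?_
  rw [map_sum]
  simp only [Matrix.sum_apply]
  refine Finset.sum_congr rfl fun j _ => ?_
  have : Matrix.single i j (X i j) = X i j • Matrix.single i j 1 := by
    rw [Matrix.smul_single, smul_eq_mul, mul_one]
  rw [this, _root_.map_smul]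
  simp [choiMatrix]

lemma cp_hermitian' {n m : Type*} [Fintype n] [DecidableEq n] [Fintype m]
    (F : Matrix n n ℂ →ₗ[ℂ] Matrix m m ℂ) (hC : (choiMatrix F).IsHermitian)
    {X : Matrix n n ℂ} (hX : X.IsHermitian) : (F X).IsHermitian := by
  show (F X)ᴴ = F X
  ext a b
  rw [conjTranspose_apply, F_apply_eq', F_apply_eq']
  calc star (∑ i, ∑ j, X i j * choiMatrix F (i, b) (j, a))
      = ∑ i, ∑ j, star (X i j) * star (choiMatrix F (i, b) (j, a)) := by
        simp [star_sum, star_mul']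
    _ = ∑ i, ∑ j, X j i * choiMatrix F (j, a) (i, b) := by
        refine Finset.sum_congr rfl fun i _ => Finset.sum_congr rfl fun j _ => ?_
        have h1 : star (X i j) = X j i := by
          conv_rhs => rw [← hX]
          simp [conjTranspose_apply]
        have h2 : star (choiMatrix F (i, b) (j, a)) = choiMatrix F (j, a) (i, b) := by
          conv_rhs => rw [← hC]
          simp [conjTranspose_apply]
        rw [h1, h2]
    _ = ∑ i, ∑ j, X i j * choiMatrix F (i, a) (j, b) := Finset.sum_comm

lemma cp_posSemidef' (F : Matrix (Fin 2) (Fin 2) ℂ →ₗ[ℂ] Matrix (Fin 2) (Fin 2) ℂ)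
    (hC : (choiMatrix F).PosSemidef) {X : Matrix (Fin 2) (Fin 2) ℂ}
    (hX : X.PosSemidef) : (F X).PosSemidef := by
  obtain ⟨B, hB⟩ : ∃ B : Matrix (Fin 2) (Fin 2) ℂ, X = Bᴴ * B := by
    open scoped MatrixOrder in
    exact CStarAlgebra.nonneg_iff_eq_star_mul_self.mp hX.nonneg
  have hXe : ∀ i j, X i j = ∑ k, star (B k i) * B k j := by
    intro i j
    rw [hB]
    simp [Matrix.mul_apply, conjTranspose_apply]
  refine Matrix.PosSemidef.of_dotProduct_mulVec_nonneg (cp_hermitian' F hC.1 hX.1) fun y => ?_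
  have key : star y ⬝ᵥ (F X *ᵥ y)
      = ∑ k : Fin 2, star (fun p : Fin 2 × Fin 2 => B k p.1 * y p.2) ⬝ᵥ
          (choiMatrix F *ᵥ fun p : Fin 2 × Fin 2 => B k p.1 * y p.2) := by
    simp only [dotProduct, mulVec, Pi.star_apply, Fintype.sum_prod_type, F_apply_eq', hXe,
      Finset.sum_mul, Finset.mul_sum, star_mul', Fin.sum_univ_two]
    ring
  rw [key]
  exact Finset.sum_nonneg fun k _ => hC.dotProduct_mulVec_nonneg _

lemma traceNorm_of_sq (A : Matrix (Fin 2) (Fin 2) ℂ) (d : ℝ) (hd : 0 ≤ d)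
    (h : Aᴴ * A = (d : ℂ) • 1) : traceNorm A = 2 * Real.sqrt d := by
  have hPSD : Matrix.PosSemidef (((Real.sqrt d : ℝ) : ℂ) • (1 : Matrix (Fin 2) (Fin 2) ℂ)) := by
    rw [Matrix.smul_one_eq_diagonal]
    exact Matrix.PosSemidef.diagonal fun i => by
      simpa using Complex.zero_le_real.mpr (Real.sqrt_nonneg d)
  have hsq : (((Real.sqrt d : ℝ) : ℂ) • (1 : Matrix (Fin 2) (Fin 2) ℂ)) ^ 2 = Aᴴ * A := by
    rw [h, smul_pow, one_pow, ← Complex.ofReal_pow, Real.sq_sqrt hd]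
  set hH := (Matrix.posSemidef_conjTranspose_mul_self A).1
  have key : ∀ w : Fin 2 → ℂ, (Aᴴ * A) *ᵥ w = (d : ℂ) • w := fun w => by
    rw [h, Matrix.smul_mulVec, Matrix.one_mulVec]
  have hev : ∀ i, hH.eigenvalues i = d := by
    intro i
    rw [hH.eigenvalues_eq i, key, dotProduct_smul, dotProduct_comm,
      ← EuclideanSpace.inner_eq_star_dotProduct, inner_self_eq_norm_sq_to_K,
      hH.eigenvectorBasis.orthonormal.1 i]
    simp
  rw [traceNorm, Matrix.trace_mul_cycle, Unitary.coe_star_mul_self, one_mul, Matrix.trace_diagonal]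
  simp [Function.comp, hev, Fin.sum_univ_two]

lemma traceNorm_traceless_herm (A : Matrix (Fin 2) (Fin 2) ℂ) (hH : A.IsHermitian)
    (htr : A 1 1 = - A 0 0) :
    traceNorm A = 2 * Real.sqrt ((A 0 0).re ^ 2 + Complex.normSq (A 0 1)) := by
  apply traceNorm_of_sq
  · exact add_nonneg (sq_nonneg _) (Complex.normSq_nonneg _)
  · have h00 : ((A 0 0).re : ℂ) = A 0 0 := hH.coe_re_apply_self 0
    have h10 : A 1 0 = star (A 0 1) := by
      conv_lhs => rw [← hH]
      simp [conjTranspose_apply]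
    have hns : (Complex.normSq (A 0 1) : ℂ) = A 0 1 * star (A 0 1) := by
      rw [← Complex.mul_conj]
      rfl
    have hAH : Aᴴ = A := hH
    rw [hAH]
    ext i j
    fin_cases i <;> fin_cases j <;>
      simp [Matrix.mul_apply, Fin.sum_univ_two, Matrix.one_apply, htr, h10,
        Complex.ofReal_add, Complex.ofReal_pow, hns, h00] <;>
      ring

/-- energy truncation for clean batteries under Gibbs-preserving
operations (CPTP maps). -/
theorem stmt_5 (ε M N : ℝ) (hε : ε ∈ Set.Ico (0:ℝ) 1) (hM : 1 < M) (hN : 1 < N) :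
    (∃ F : Matrix (Fin 2) (Fin 2) ℂ →ₗ[ℂ] Matrix (Fin 2) (Fin 2) ℂ,
        IsCPTP F ∧ F (piM M) = piM N ∧ traceDist (F ket1) ket1 ≤ ε) ↔
      M ≥ N * (1 - ε) := by
  have hM0 : (0:ℝ) < M := by linarith
  have hN0 : (0:ℝ) < N := by linarith
  constructor
  · rintro ⟨F, ⟨hChoi, hTP⟩, hpi, hdist⟩
    set σ := F ket1 with hσdef
    -- σ is Hermitian
    have hket1H : ket1.IsHermitian := by
      apply Matrix.isHermitian_diagonal_of_self_adjoint
      funext i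
      fin_cases i <;> simp [star, Complex.ext_iff]
    have hσH : σ.IsHermitian := cp_hermitian' F hChoi.1 hket1H
    -- trace of σ is 1
    have htrket1 : ket1.trace = 1 := by
      simp [ket1, Matrix.trace, Fin.sum_univ_two]
    have htrσ : σ.trace = 1 := by rw [hσdef, hTP, htrket1]
    have htrσ' : σ 0 0 + σ 1 1 = 1 := by
      rw [← htrσ]
      simp [Matrix.trace, Fin.sum_univ_two, Matrix.diag]
    -- the matrix M•π_M − ket1 is PSD
    have hJ : ((M:ℂ) • piM M - ket1) = Matrix.diagonal ![((M-1:ℝ) : ℂ), 0] := by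
      ext i j
      fin_cases i <;> fin_cases j <;>
        simp [piM, ket1, Matrix.diagonal] <;>
        (try push_cast) <;> (try field_simp) <;> (try simp)
    have hJpsd : ((M:ℂ) • piM M - ket1).PosSemidef := by
      rw [hJ]
      refine Matrix.PosSemidef.diagonal fun i => ?_
      fin_cases i
      · simp only [Matrix.cons_val_zero]
        exact Complex.zero_le_real.mpr (by linarith)
      · simp
    have hFJpsd : ((M:ℂ) • piM N - σ).PosSemidef := by
      have := cp_posSemidef' F hChoi hJpsd
      rwa [map_sub, _root_.map_smul, hpi] at this
    -- quadratic form at e₁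
    have hq := hFJpsd.dotProduct_mulVec_nonneg ![0, 1]
    have hqval : star (![0,1] : Fin 2 → ℂ) ⬝ᵥ (((M:ℂ) • piM N - σ) *ᵥ ![0,1])
        = (M : ℂ) * ((1/N : ℝ) : ℂ) - σ 1 1 := by
      simp [dotProduct, mulVec, Fin.sum_univ_two, piM, Matrix.diagonal]
    rw [hqval] at hq
    have hre : (σ 1 1).re ≤ M / N := by
      rw [Complex.le_def] at hq
      have := hq.1
      simp [Complex.sub_re, Complex.mul_re] at this
      rw [div_eq_mul_inv]
      linarith [this]
    -- trace distance bound
    set A := σ - ket1 with hAdef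
    have hAH : A.IsHermitian := hσH.sub hket1H
    have hA00 : A 0 0 = σ 0 0 := by simp [hAdef, ket1, Matrix.diagonal]
    have hA11 : A 1 1 = σ 1 1 - 1 := by simp [hAdef, ket1, Matrix.diagonal]
    have hAtr : A 1 1 = - A 0 0 := by
      rw [hA00, hA11]
      linear_combination htrσ'
    have hTD : traceDist σ ket1 = Real.sqrt ((A 0 0).re ^ 2 + Complex.normSq (A 0 1)) := by
      rw [traceDist, ← hAdef, traceNorm_traceless_herm A hAH hAtr]
      ring
    rw [hTD] at hdist
    have h1 : (A 0 0).re ≤ ε := by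
      calc (A 0 0).re ≤ |(A 0 0).re| := le_abs_self _
        _ = Real.sqrt ((A 0 0).re ^ 2) := (Real.sqrt_sq_eq_abs _).symm
        _ ≤ Real.sqrt ((A 0 0).re ^ 2 + Complex.normSq (A 0 1)) :=
            Real.sqrt_le_sqrt (by nlinarith [Complex.normSq_nonneg (A 0 1)])
        _ ≤ ε := hdist
    have h2 : (A 0 0).re = 1 - (σ 1 1).re := by
      rw [hA00]
      have : (σ 0 0).re + (σ 1 1).re = 1 := by
        have := congrArg Complex.re htrσ'
        simpa using this
      linarith
    -- conclude
    have : 1 - ε ≤ M / N := by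
      rw [h2] at h1
      linarith
    have h3 := mul_le_mul_of_nonneg_right this (le_of_lt hN0)
    rw [div_mul_cancel₀ M (ne_of_gt hN0)] at h3
    linarith [h3]
  · -- construction
    intro hge
    have hM1 : (1:ℝ) - 1/M ≠ 0 := by
      have : 1/M < 1 := by
        rw [div_lt_one hM0]; exact hM
      linarith
    have hM1' : (0:ℝ) < 1 - 1/M := by
      have : 1/M < 1 := by rw [div_lt_one hM0]; exact hM
      linarith
    set t : ℝ := max 0 (1 - M/N) with ht_def
    set a : ℝ := ((1 - 1/N) - t/M) / (1 - 1/M) with ha_def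
    set b : ℝ := (1/N - (1-t)/M) / (1 - 1/M) with hb_def
    have ht0 : 0 ≤ t := le_max_left _ _
    have htMN : 1 - M/N ≤ t := le_max_right _ _
    have ht1 : t ≤ 1 - 1/N := by
      apply max_le
      · have : 1/N < 1 := by rw [div_lt_one hN0]; exact hN
        linarith
      · have h4 : 1/N ≤ M/N := by gcongr <;> linarith
        linarith
    have ht1' : t ≤ 1 := by
      have : (0:ℝ) < 1/N := by positivity
      linarith
    have htε : t ≤ ε := by
      apply max_le hε.1
      have h5 : 1 - ε ≤ M / N := by
        rw [le_div_iff₀ hN0]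
        linarith [hge]
      linarith
    have ha0 : 0 ≤ a := by
      apply div_nonneg _ (le_of_lt hM1')
      have : t / M ≤ t := by
        apply div_le_self ht0 (le_of_lt hM)
      linarith
    have hb0 : 0 ≤ b := by
      apply div_nonneg _ (le_of_lt hM1')
      have h6 : 1 - t ≤ M / N := by linarith
      have h7 : (1 - t) / M ≤ (M / N) / M := by gcongr
      have h8 : M / N / M = 1 / N := by
        field_simp
      linarith
    have hab : a + b = 1 := by
      rw [ha_def, hb_def, ← add_div, div_eq_one_iff_eq hM1]
      ring
    set D0 : Matrix (Fin 2) (Fin 2) ℂ := Matrix.diagonal ![((a:ℝ):ℂ), ((b:ℝ):ℂ)] with hD0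
    set D1 : Matrix (Fin 2) (Fin 2) ℂ := Matrix.diagonal ![((t:ℝ):ℂ), ((1-t:ℝ):ℂ)] with hD1
    set Fc : Matrix (Fin 2) (Fin 2) ℂ →ₗ[ℂ] Matrix (Fin 2) (Fin 2) ℂ :=
      { toFun := fun X => X 0 0 • D0 + X 1 1 • D1,
        map_add' := fun X Y => by
          simp only [Matrix.add_apply, add_smul]
          abel,
        map_smul' := fun c X => by
          simp only [Matrix.smul_apply, smul_eq_mul, mul_smul, smul_add,
            RingHom.id_apply] } with hFc
    have hFcapp : ∀ X : Matrix (Fin 2) (Fin 2) ℂ, Fc X = X 0 0 • D0 + X 1 1 • D1 :=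
      fun X => rfl
    refine ⟨Fc, ⟨?_, ?_⟩, ?_, ?_⟩
    · -- complete positivity
      set d : Fin 2 × Fin 2 → ℂ := fun p =>
        if p.1 = 0 then (if p.2 = 0 then ((a:ℝ):ℂ) else ((b:ℝ):ℂ))
        else (if p.2 = 0 then ((t:ℝ):ℂ) else ((1-t:ℝ):ℂ)) with hd_def
      have hchoi : choiMatrix Fc = Matrix.diagonal d := by
        ext p q
        obtain ⟨i, x⟩ := p
        obtain ⟨j, y⟩ := q
        fin_cases i <;> fin_cases j <;> fin_cases x <;> fin_cases y <;>
          simp [choiMatrix, hFcapp, Matrix.single, Matrix.diagonal, hd_def, hD0, hD1,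
            Prod.ext_iff]
      rw [hchoi]
      refine Matrix.PosSemidef.diagonal fun p => ?_
      obtain ⟨i, x⟩ := p
      have l1 : (0:ℂ) ≤ ((a:ℝ):ℂ) := Complex.zero_le_real.mpr ha0
      have l2 : (0:ℂ) ≤ ((b:ℝ):ℂ) := Complex.zero_le_real.mpr hb0
      have l3 : (0:ℂ) ≤ ((t:ℝ):ℂ) := Complex.zero_le_real.mpr ht0
      have l4 : (0:ℂ) ≤ ((1-t:ℝ):ℂ) := Complex.zero_le_real.mpr (by linarith)
      fin_cases i <;> fin_cases x <;> simp [hd_def] <;> (try norm_num) <;>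
        first | exact l1 | exact l2 | exact l3 | exact l4 | exact ha0 | exact hb0 | exact ht0
              | exact_mod_cast ht1' | linarith
    · -- trace preserving
      intro X
      have habC : ((a:ℝ):ℂ) + ((b:ℝ):ℂ) = 1 := by
        rw [← Complex.ofReal_add, hab]
        norm_num
      have htC : ((t:ℝ):ℂ) + ((1-t:ℝ):ℂ) = 1 := by push_cast; ring
      rw [hFcapp, Matrix.trace_add, Matrix.trace_smul, Matrix.trace_smul]
      have htr0 : D0.trace = 1 := by
        rw [hD0]
        simpa [Matrix.trace, Matrix.diag, Fin.sum_univ_two] using habC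
      have htr1 : D1.trace = 1 := by
        rw [hD1]
        simpa [Matrix.trace, Matrix.diag, Fin.sum_univ_two] using htC
      rw [htr0, htr1]
      simp [Matrix.trace, Matrix.diag, Fin.sum_univ_two]
    · -- Gibbs preserving
      have hMne : M ≠ 0 := ne_of_gt hM0
      have hNne : N ≠ 0 := ne_of_gt hN0
      have hM1ne : M - 1 ≠ 0 := by intro h; apply hM1; field_simp; linarith
      have ka : (1 - 1/M) * a = 1 - 1/N - t/M := by
        rw [ha_def]
        field_simp
      have kb : (1 - 1/M) * b = 1/N - (1-t)/M := by
        rw [hb_def]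
        field_simp
      have k0 : (1 - M⁻¹) * a + M⁻¹ * t = 1 - N⁻¹ := by linear_combination ka
      have k1 : (1 - M⁻¹) * b + M⁻¹ * (1 - t) = N⁻¹ := by linear_combination kb
      rw [hFcapp]
      ext i j
      fin_cases i <;> fin_cases j <;>
        simp [piM, Matrix.diagonal, hD0, hD1, smul_eq_mul]
      · exact_mod_cast k0
      · exact_mod_cast k1
    · -- trace distance
      have hFket : Fc ket1 = D1 := by
        rw [hFcapp]
        have h0 : ket1 0 0 = 0 := by simp [ket1]
        have h1 : ket1 1 1 = 1 := by simp [ket1]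
        rw [h0, h1, zero_smul, one_smul, zero_add]
      rw [hFket]
      have hA : D1 - ket1 = Matrix.diagonal ![((t:ℝ):ℂ), ((-t:ℝ):ℂ)] := by
        ext i j
        fin_cases i <;> fin_cases j <;>
          simp [ket1, hD1, Matrix.diagonal] <;> push_cast <;> ring
      have hherm : (D1 - ket1).IsHermitian := by
        rw [hA]
        apply Matrix.isHermitian_diagonal_of_self_adjoint
        funext i
        fin_cases i <;> simp [Complex.star_def, Complex.conj_ofReal]
      have h11 : (D1 - ket1) 1 1 = -((D1 - ket1) 0 0) := by
        rw [hA]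
        simp [Matrix.diagonal]
      have h00re : ((D1 - ket1) 0 0).re = t := by
        rw [hA]
        simp [Matrix.diagonal]
      have h01 : (D1 - ket1) 0 1 = 0 := by
        rw [hA]
        simp [Matrix.diagonal]
      rw [traceDist, traceNorm_traceless_herm _ hherm h11, h00re, h01]
      have : Real.sqrt (t ^ 2 + Complex.normSq 0) = t := by
        rw [map_zero, add_zero, Real.sqrt_sq ht0]
      rw [this]
      linarith
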